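/- Let (P, γ, I, ⋆) be a braided ABQR operad with a coherent unit action (α, β) satisfying α = β. Then there is a basis {p₁,…,p_n} of P₂ with ⋆ = Σᵢ pᵢ such that the relation space Λ is contained in the span of {(p₁⊗⋆, p₁⊗⋆) + (⋆⊗p₁, ⋆⊗p₁) − (p₁⊗p₁, p₁⊗p₁)} ∪ {(pᵢ⊗pⱼ, 0), (0, pᵢ⊗pⱼ) : 2 ≤ i,j ≤ n}. -/

import Mathlib

open TensorProduct

variable (k : Type*) [Field k] [CharZero k]
variable (V : Type*) [AddCommGroup V] [Module k V]

/-- `a ⊗ b ↦ f(a) • b`. -/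
noncomputable def contrL (f : V →ₗ[k] k) : V ⊗[k] V →ₗ[k] V :=
  TensorProduct.lift ((LinearMap.lsmul k V) ∘ₗ f)

/-- `a ⊗ b ↦ f(b) • a`. -/
noncomputable def contrR (f : V →ₗ[k] k) : V ⊗[k] V →ₗ[k] V :=
  TensorProduct.lift ((LinearMap.lsmul k V) ∘ₗ f).flip

/-- `a ⊗ b ↦ f(a) * g(b)`. -/
noncomputable def contrS (f g : V →ₗ[k] k) : V ⊗[k] V →ₗ[k] k :=
  (TensorProduct.lid k k).toLinearMap ∘ₗ TensorProduct.map f g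

/-- The five coherence equations (C1)–(C5) of Theorem 4.1 for a relation pair
`(Σᵢ aᵢ ⊗ bᵢ, Σⱼ cⱼ ⊗ dⱼ) ∈ P₂^{⊗2} ⊕ P₂^{⊗2}`, expressed for the unit-action
maps `α, β : P₂ → k` and the associative element `⋆ = st`:
(C1) `Σ β(aᵢ)bᵢ = Σ β(cⱼ)dⱼ`; (C2) `Σ α(aᵢ)bᵢ = Σ β(dⱼ)cⱼ`;
(C3) `Σ α(bᵢ)aᵢ = Σ α(dⱼ)cⱼ`; (C4) `Σ β(bᵢ)aᵢ = (Σ β(cⱼ)β(dⱼ)) ⋆`;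
(C5) `(Σ α(aᵢ)α(bᵢ)) ⋆ = Σ α(cⱼ)dⱼ`. -/
noncomputable def Coherent (α β : V →ₗ[k] k) (st : V)
    (x : (V ⊗[k] V) × (V ⊗[k] V)) : Prop :=
  contrL k V β x.1 = contrL k V β x.2 ∧
  contrL k V α x.1 = contrR k V β x.2 ∧
  contrR k V α x.1 = contrR k V α x.2 ∧
  contrR k V β x.1 = contrS k V β β x.2 • st ∧
  contrS k V α α x.1 • st = contrL k V α x.2

/-- The spanning set `λ''_{n,coh}` (Eq. (4.3)) of admissible quadratic relations
for a coherent unit action with `α = β`, relative to a basis `p₁,…,pₙ` of `P₂`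
with `⋆ = Σᵢ pᵢ` (indices `0`-based: `p₁ = p 0`):
`(p₁⊗⋆, p₁⊗⋆) + (⋆⊗p₁, ⋆⊗p₁) − (p₁⊗p₁, p₁⊗p₁)`;
`(pᵢ⊗pⱼ, 0)`, `(0, pᵢ⊗pⱼ)` for `2 ≤ i, j ≤ n`. -/
def classSetEq {n : ℕ} (hn : 1 ≤ n) (st : V) (p : Fin n → V) :
    Set ((V ⊗[k] V) × (V ⊗[k] V)) :=
  {x | x = (p ⟨0, by omega⟩ ⊗ₜ[k] st, p ⟨0, by omega⟩ ⊗ₜ[k] st)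
         + (st ⊗ₜ[k] p ⟨0, by omega⟩, st ⊗ₜ[k] p ⟨0, by omega⟩)
         - (p ⟨0, by omega⟩ ⊗ₜ[k] p ⟨0, by omega⟩,
            p ⟨0, by omega⟩ ⊗ₜ[k] p ⟨0, by omega⟩)
    ∨ (∃ i j : Fin n, 1 ≤ (i : ℕ) ∧ 1 ≤ (j : ℕ) ∧
        (x = (p i ⊗ₜ[k] p j, 0) ∨ x = (0, p i ⊗ₜ[k] p j)))}

set_option linter.unusedSectionVars false in
lemma contrL_tmul {k : Type*} [Field k] {V : Type*} [AddCommGroup V] [Module k V]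
    (f : V →ₗ[k] k) (a b : V) : contrL k V f (a ⊗ₜ[k] b) = f a • b := by
  simp [contrL]

lemma contrR_tmul {k : Type*} [Field k] {V : Type*} [AddCommGroup V] [Module k V]
    (f : V →ₗ[k] k) (a b : V) : contrR k V f (a ⊗ₜ[k] b) = f b • a := by
  simp [contrR]

/-- classification, case `α = β`. Let `(P, γ, I, ⋆)` be a
braided ABQR operad with a coherent unit action `(α, β)` satisfying `α = β`
(coherence expressed via the equations (C1)–(C5), predicate `Coherent`).
Then there is a basis `{pᵢ}` of `P₂` with `⋆ = Σᵢ pᵢ` such that the relation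
space `Λ` is contained in the span of the set `classSetEq`. -/
theorem classification_coherent_eq {k : Type*} [Field k] [CharZero k]
    {V : Type*} [AddCommGroup V] [Module k V] [FiniteDimensional k V]
    (n : ℕ) (hn : 1 ≤ n) (hdim : Module.finrank k V = n) (st : V)
    (Λ : Submodule k ((V ⊗[k] V) × (V ⊗[k] V)))
    (α : V →ₗ[k] k) (hα : α st = 1)
    (hcoh : ∀ x ∈ Λ, Coherent k V α α st x) :
    ∃ p : Module.Basis (Fin n) k V, st = ∑ i, p i ∧
      Λ ≤ Submodule.span k (classSetEq k V hn st p) := by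
  obtain ⟨m, rfl⟩ : ∃ m, n = m + 1 := ⟨n - 1, by omega⟩
  -- the kernel of α has dimension m
  have hker : Module.finrank k (LinearMap.ker α) = m := by
    have h1 := LinearMap.finrank_range_add_finrank_ker α
    have hr : LinearMap.range α = ⊤ := by
      rw [LinearMap.range_eq_top]
      intro c; exact ⟨c • st, by simp [hα]⟩
    rw [hr, hdim, finrank_top, Module.finrank_self] at h1
    omega
  let q : Module.Basis (Fin m) k (LinearMap.ker α) := Module.finBasisOfFinrankEq k _ hker
  have hαq : ∀ i, α ((q i : V)) = 0 := fun i => (q i).2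
  set p1 : V := st - ∑ i, (q i : V) with hp1def
  have hαp1 : α p1 = 1 := by
    simp [hp1def, map_sub, map_sum, hαq, hα]
  -- the basis
  let p : Module.Basis (Fin (m + 1)) k V :=
    Module.Basis.mkFinCons p1 q
      (by
        intro c x hx hcx
        have : α (c • p1 + x) = 0 := by rw [hcx]; simp
        simpa [hαp1, (LinearMap.mem_ker).mp hx] using this)
      (by
        intro z
        refine ⟨-α z, ?_⟩
        simp [LinearMap.mem_ker, hαp1])
  have hpc : (p : Fin (m+1) → V) = Fin.cons p1 (fun i => (q i : V)) :=
    Module.Basis.coe_mkFinCons _ _ _ _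
  have hp0 : p 0 = p1 := by rw [hpc]; rfl
  have hpsucc : ∀ i : Fin m, p i.succ = (q i : V) := fun i => by rw [hpc]; rfl
  have hαp : ∀ i, α (p i) = if i = 0 then 1 else 0 := by
    intro i
    induction i using Fin.cases with
    | zero => simp [hp0, hαp1]
    | succ i => simp [hpsucc, hαq, Fin.succ_ne_zero]
  have hst : st = ∑ i, p i := by
    rw [Fin.sum_univ_succ, hp0, hp1def]
    simp [hpsucc]
  refine ⟨p, hst, ?_⟩
  -- coordinate lemmas
  have hrepr0 : ∀ a : V, p.repr a 0 = α a := by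
    intro a
    conv_rhs => rw [← Module.Basis.sum_repr p a]
    rw [map_sum]
    simp [hαp, mul_ite]
  have hreprst : ∀ j, p.repr st j = 1 := by
    intro j
    rw [hst, map_sum]
    simp [Finsupp.single_apply]
  set B := Module.Basis.tensorProduct p p with hBdef
  have lemL : ∀ (t : V ⊗[k] V) (j : Fin (m+1)),
      p.repr (contrL k V α t) j = B.repr t (0, j) := by
    intro t
    induction t using TensorProduct.induction_on with
    | zero => simp
    | tmul a b =>
        intro j
        rw [contrL_tmul, hBdef, Module.Basis.tensorProduct_repr_tmul_apply, map_smul]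
        simp [hrepr0 a, smul_eq_mul, mul_comm]
    | add s t hs ht => intro j; rw [map_add, map_add, map_add]; simp [hs j, ht j]
  have lemR : ∀ (t : V ⊗[k] V) (i : Fin (m+1)),
      p.repr (contrR k V α t) i = B.repr t (i, 0) := by
    intro t
    induction t using TensorProduct.induction_on with
    | zero => simp
    | tmul a b =>
        intro i
        rw [contrR_tmul, hBdef, Module.Basis.tensorProduct_repr_tmul_apply, map_smul]
        simp [hrepr0 b, smul_eq_mul, mul_comm]
    | add s t hs ht => intro i; rw [map_add, map_add, map_add]; simp [hs i, ht i]
  -- the distinguished first generator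
  set t0 : V ⊗[k] V := p 0 ⊗ₜ[k] st + st ⊗ₜ[k] p 0 - p 0 ⊗ₜ[k] p 0 with ht0def
  have hreprp0 : ∀ i : Fin (m+1), p.repr (p 0) i = if i = 0 then 1 else 0 := by
    intro i; simp [Finsupp.single_apply, eq_comm]
  have ht0repr : ∀ i j, B.repr t0 (i, j)
      = (if i = 0 then 1 else 0) + (if j = 0 then 1 else 0)
        - (if i = 0 then 1 else 0) * (if j = 0 then 1 else 0) := by
    intro i j
    rw [ht0def, map_sub, map_add]
    simp only [Finsupp.sub_apply, Finsupp.add_apply, hBdef,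
      Module.Basis.tensorProduct_repr_tmul_apply, hreprst, hreprp0, smul_eq_mul]
    ring
  -- main containment
  intro x hx
  obtain ⟨h1, h2, h3, h4, h5⟩ := hcoh x hx
  set u := x.1 with hu
  set v := x.2 with hv
  set c : k := contrS k V α α u with hc
  have eL_u : contrL k V α u = c • st := by rw [hc, h5, ← h1]
  have eL_v : contrL k V α v = c • st := by rw [← h5]
  have eR_v : contrR k V α v = c • st := by rw [← h2, eL_u]
  have eR_u : contrR k V α u = c • st := by rw [h3, eR_v]
  have hrepr_cst : ∀ j, p.repr (c • st) j = c := by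
    intro j; rw [map_smul]; simp [hreprst]
  -- coordinates of u and v on the boundary rows/columns
  have hub : ∀ i j : Fin (m+1), i = 0 ∨ j = 0 → B.repr u (i, j) = c := by
    rintro i j (rfl | rfl)
    · rw [← lemL, eL_u, hrepr_cst]
    · rw [← lemR, eR_u, hrepr_cst]
  have hvb : ∀ i j : Fin (m+1), i = 0 ∨ j = 0 → B.repr v (i, j) = c := by
    rintro i j (rfl | rfl)
    · rw [← lemL, eL_v, hrepr_cst]
    · rw [← lemR, eR_v, hrepr_cst]
  -- residual coordinates vanish on the boundary
  have hres : ∀ (w : V ⊗[k] V), (∀ i j : Fin (m+1), i = 0 ∨ j = 0 → B.repr w (i, j) = c) →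
      ∀ i j : Fin (m+1), i = 0 ∨ j = 0 → B.repr (w - c • t0) (i, j) = 0 := by
    intro w hw i j hij
    rw [map_sub, map_smul, Finsupp.sub_apply, Finsupp.smul_apply, hw i j hij, ht0repr,
      smul_eq_mul]
    rcases hij with rfl | rfl <;> simp
  -- membership of each part in the span
  set S : Set ((V ⊗[k] V) × (V ⊗[k] V)) := classSetEq k V (by omega) st p with hSdef
  have hp00 : p ⟨0, by omega⟩ = p 0 := rfl
  have hsS : ((t0, t0) : (V ⊗[k] V) × (V ⊗[k] V)) ∈ S := by
    left
    rw [ht0def]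
    rfl
  have hresL : ∀ (w : V ⊗[k] V), (∀ i j : Fin (m+1), i = 0 ∨ j = 0 → B.repr w (i, j) = 0) →
      ((w, 0) : (V ⊗[k] V) × (V ⊗[k] V)) ∈ Submodule.span k S := by
    intro w hw
    have hwsum : w = ∑ ij : Fin (m+1) × Fin (m+1), B.repr w ij • (p ij.1 ⊗ₜ[k] p ij.2) := by
      conv_lhs => rw [← Module.Basis.sum_repr B w]
      refine Finset.sum_congr rfl fun ij _ => ?_
      rw [hBdef, Module.Basis.tensorProduct_apply']
    have : ((w, 0) : (V ⊗[k] V) × (V ⊗[k] V))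
        = ∑ ij : Fin (m+1) × Fin (m+1), B.repr w ij • ((p ij.1 ⊗ₜ[k] p ij.2, 0)) := by
      apply Prod.ext
      · simpa [Prod.fst_sum] using hwsum
      · simp [Prod.snd_sum]
    rw [this]
    refine Submodule.sum_mem _ fun ij _ => ?_
    by_cases hij : ij.1 = 0 ∨ ij.2 = 0
    · rw [hw ij.1 ij.2 hij]
      simp
    · push_neg at hij
      refine Submodule.smul_mem _ _ (Submodule.subset_span ?_)
      right
      exact ⟨ij.1, ij.2, Nat.one_le_iff_ne_zero.mpr (fun h => hij.1 (Fin.ext h)),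
        Nat.one_le_iff_ne_zero.mpr (fun h => hij.2 (Fin.ext h)), Or.inl rfl⟩
  have hresR : ∀ (w : V ⊗[k] V), (∀ i j : Fin (m+1), i = 0 ∨ j = 0 → B.repr w (i, j) = 0) →
      ((0, w) : (V ⊗[k] V) × (V ⊗[k] V)) ∈ Submodule.span k S := by
    intro w hw
    have hwsum : w = ∑ ij : Fin (m+1) × Fin (m+1), B.repr w ij • (p ij.1 ⊗ₜ[k] p ij.2) := by
      conv_lhs => rw [← Module.Basis.sum_repr B w]
      refine Finset.sum_congr rfl fun ij _ => ?_
      rw [hBdef, Module.Basis.tensorProduct_apply']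
    have : ((0, w) : (V ⊗[k] V) × (V ⊗[k] V))
        = ∑ ij : Fin (m+1) × Fin (m+1), B.repr w ij • ((0, p ij.1 ⊗ₜ[k] p ij.2)) := by
      apply Prod.ext
      · simp [Prod.fst_sum]
      · simpa [Prod.snd_sum] using hwsum
    rw [this]
    refine Submodule.sum_mem _ fun ij _ => ?_
    by_cases hij : ij.1 = 0 ∨ ij.2 = 0
    · rw [hw ij.1 ij.2 hij]
      simp
    · push_neg at hij
      refine Submodule.smul_mem _ _ (Submodule.subset_span ?_)
      right
      exact ⟨ij.1, ij.2, Nat.one_le_iff_ne_zero.mpr (fun h => hij.1 (Fin.ext h)),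
        Nat.one_le_iff_ne_zero.mpr (fun h => hij.2 (Fin.ext h)), Or.inr rfl⟩
  have hdecomp : x = c • ((t0, t0) : (V ⊗[k] V) × (V ⊗[k] V))
      + (u - c • t0, 0) + (0, v - c • t0) := by
    rw [Prod.ext_iff]
    constructor <;> simp [← hu, ← hv]
  show x ∈ Submodule.span k S
  rw [hdecomp]
  refine Submodule.add_mem _ (Submodule.add_mem _ ?_ ?_) ?_
  · exact Submodule.smul_mem _ _ (Submodule.subset_span hsS)
  · exact hresL _ (hres u hub)
  · exact hresR _ (hres v hvb)
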